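/- Let Ũ be a d×d complex upper-Hessenberg matrix whose columns are pairwise orthogonal, with every column of norm 1 except possibly the last column. Let Ũ = P D Q* be a singular value decomposition with P, Q unitary and D diagonal with nonnegative entries. Then P Q* equals the matrix obtained from Ũ by normalizing its last column. In particular, the closest unitary matrix to Ũ (in Frobenius norm) is obtained by normalizing the last column of Ũ. -/

import Mathlib

open Finset Matrix
open scoped ComplexConjugate

section
open scoped ComplexOrder

lemma aux_psd_diag {m : Type*} [Fintype m] [DecidableEq m] (f : m → ℝ) (hf : ∀ i, 0 ≤ f i) :
    (Matrix.diagonal (fun i => (f i : ℂ))).PosSemidef :=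
  Matrix.PosSemidef.diagonal (by
    intro i
    simp only [Pi.zero_apply]
    exact_mod_cast hf i)

lemma aux_sqrt_unique {m : Type*} [Fintype m] [DecidableEq m] (Q : Matrix m m ℂ)
    (f g : m → ℝ) (hf : ∀ i, 0 ≤ f i) (hg : ∀ i, 0 ≤ g i)
    (hsq : (Q * Matrix.diagonal (fun i => (f i : ℂ)) * Qᴴ) ^ 2
        = (Matrix.diagonal (fun i => (g i : ℂ))) ^ 2) :
    Q * Matrix.diagonal (fun i => (f i : ℂ)) * Qᴴ = Matrix.diagonal (fun i => (g i : ℂ)) :=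
  by
    open scoped MatrixOrder in
    exact (CFC.sq_eq_sq_iff _ _ ((aux_psd_diag f hf).mul_mul_conjTranspose_same Q).nonneg
      (aux_psd_diag g hg).nonneg).mp hsq

end

/-- for an upper-Hessenberg matrix with orthogonal columns, all of
norm 1 except possibly the last, the unitary factor PQ* of any SVD equals the
matrix obtained by normalizing the last column. -/
theorem stmt_5 {d : ℕ} (hd : 0 < d)
    (Ut : Matrix (Fin d) (Fin d) ℂ)
    (hHess : ∀ i j : Fin d, (j : ℕ) + 1 < (i : ℕ) → Ut i j = 0)
    (horth : ∀ i j : Fin d, i ≠ j → ∑ k, conj (Ut k i) * Ut k j = 0)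
    (hnorm : ∀ i : Fin d, (i : ℕ) < d - 1 → ∑ k, ‖Ut k i‖ ^ 2 = 1)
    (hlast : 0 < Real.sqrt (∑ k, ‖Ut k ⟨d - 1, by omega⟩‖ ^ 2))
    (P Q : Matrix (Fin d) (Fin d) ℂ)
    (hP : P ∈ Matrix.unitaryGroup (Fin d) ℂ) (hQ : Q ∈ Matrix.unitaryGroup (Fin d) ℂ)
    (D : Fin d → ℝ) (hD : ∀ i, 0 ≤ D i)
    (hSVD : Ut = P * Matrix.diagonal (fun i => (D i : ℂ)) * Qᴴ) :
    P * Qᴴ = Matrix.of (fun i j : Fin d =>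
      if j = (⟨d - 1, by omega⟩ : Fin d) then
        Ut i j / (Real.sqrt (∑ k, ‖Ut k ⟨d - 1, by omega⟩‖ ^ 2) : ℂ)
      else Ut i j) := by
  set n : Fin d := ⟨d - 1, by omega⟩ with hn
  set r : ℝ := Real.sqrt (∑ k, ‖Ut k n‖ ^ 2) with hr
  set Dc : Matrix (Fin d) (Fin d) ℂ := diagonal (fun i => (D i : ℂ)) with hDc
  have hr0 : (0:ℝ) < r := hlast
  have hrC : (r : ℂ) ≠ 0 := by exact_mod_cast hr0.ne'
  have hr2 : r ^ 2 = ∑ k, ‖Ut k n‖ ^ 2 := by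
    rw [hr]; exact Real.sq_sqrt (Finset.sum_nonneg fun k _ => sq_nonneg _)
  -- Gram matrix
  have hgram : Utᴴ * Ut = diagonal (fun i => if i = n then ((r:ℂ)^2) else 1) := by
    ext i j
    rw [Matrix.mul_apply, Matrix.diagonal_apply]
    by_cases hij : i = j
    · subst hij
      simp only [conjTranspose_apply, if_pos rfl]
      have hsum : ∑ k, star (Ut k i) * Ut k i = ((∑ k, ‖Ut k i‖ ^ 2 : ℝ) : ℂ) := by
        push_cast
        refine Finset.sum_congr rfl fun k _ => ?_
        rw [RCLike.star_def, RCLike.conj_mul]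
        norm_cast
      rw [hsum]
      by_cases hin : i = n
      · rw [if_pos hin, hin, ← hr2]; push_cast; ring
      · rw [if_neg hin]
        have hilt : (i:ℕ) < d - 1 := by
          have h1 : (i:ℕ) < d := i.2
          have h2 : (i:ℕ) ≠ d - 1 := fun h => hin (Fin.ext h)
          omega
        rw [hnorm i hilt]; norm_num
    · rw [if_neg hij]
      simpa [conjTranspose_apply] using horth i j hij
  -- square root matrices
  set s : Fin d → ℝ := fun i => if i = n then r else 1 with hsdef
  set S : Matrix (Fin d) (Fin d) ℂ := diagonal (fun i => ((s i : ℝ) : ℂ)) with hS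
  have hQQ : Qᴴ * Q = 1 := mem_unitaryGroup_iff'.mp hQ
  have hQQ' : Q * Qᴴ = 1 := mem_unitaryGroup_iff.mp hQ
  have hPP : Pᴴ * P = 1 := mem_unitaryGroup_iff'.mp hP
  have hdH : Dcᴴ = Dc := by
    rw [hDc, diagonal_conjTranspose]
    refine congrArg diagonal (funext fun i => ?_)
    simp [Complex.conj_ofReal]
  have hsq : (Q * Dc * Qᴴ) ^ 2 = S ^ 2 := by
    have h1 : (Q * Dc * Qᴴ) ^ 2 = Utᴴ * Ut := by
      rw [hSVD, pow_two]
      simp only [conjTranspose_mul, conjTranspose_conjTranspose, hdH, Matrix.mul_assoc]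
      have e1 : Qᴴ * (Q * (Dc * Qᴴ)) = Dc * Qᴴ := by
        rw [← Matrix.mul_assoc, hQQ, Matrix.one_mul]
      have e2 : Pᴴ * (P * (Dc * Qᴴ)) = Dc * Qᴴ := by
        rw [← Matrix.mul_assoc, hPP, Matrix.one_mul]
      rw [e1, e2]
    have h2 : S ^ 2 = Utᴴ * Ut := by
      rw [hgram, pow_two, hS, diagonal_mul_diagonal]
      refine congrArg diagonal (funext fun i => ?_)
      by_cases hin : i = n <;> simp [hsdef, hin, sq]
    rw [h1, h2]
  have hs0 : ∀ i, 0 ≤ s i := by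
    intro i
    rw [hsdef]
    dsimp only
    split_ifs
    · exact hr0.le
    · exact zero_le_one
  have hTS : Q * Dc * Qᴴ = S := aux_sqrt_unique Q D s hD hs0 hsq
  -- Ut = P * Qᴴ * S
  have hUt : Ut = P * Qᴴ * S := by
    have hdiag : Dc = Qᴴ * S * Q := by
      have h3 : Qᴴ * (Q * Dc * Qᴴ) * Q = Dc := by
        calc Qᴴ * (Q * Dc * Qᴴ) * Q
            = (Qᴴ * Q) * (Dc * (Qᴴ * Q)) := by simp only [Matrix.mul_assoc]
          _ = Dc := by rw [hQQ, Matrix.one_mul, Matrix.mul_one]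
      rw [← h3, hTS]
    rw [hSVD, hdiag]
    calc P * (Qᴴ * S * Q) * Qᴴ = P * (Qᴴ * (S * (Q * Qᴴ))) := by simp only [Matrix.mul_assoc]
      _ = P * Qᴴ * S := by rw [hQQ', Matrix.mul_one, Matrix.mul_assoc]
  -- invert S
  set Sinv : Matrix (Fin d) (Fin d) ℂ :=
    diagonal (fun i => if i = n then (r:ℂ)⁻¹ else 1) with hSi
  have hSS : S * Sinv = 1 := by
    rw [hS, hSi, diagonal_mul_diagonal, ← diagonal_one]
    refine congrArg diagonal (funext fun i => ?_)
    by_cases hin : i = n <;> simp [hsdef, hin, mul_inv_cancel₀ hrC]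
  have hgoal : P * Qᴴ = Ut * Sinv := by
    rw [hUt, Matrix.mul_assoc, hSS, Matrix.mul_one]
  rw [hgoal]
  ext i j
  rw [Matrix.mul_apply]
  simp only [hSi, Matrix.diagonal_apply, Matrix.of_apply]
  rw [Finset.sum_eq_single j]
  · by_cases hjn : j = n <;> simp [hjn, div_eq_mul_inv]
  · intro b _ hbj
    rw [if_neg hbj, mul_zero]
  · intro h; exact absurd (Finset.mem_univ j) h
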